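/- Let C be a smooth plane curve of degree q + 2 over F_q such that C passes through every F_q-rational point of the projective plane, i.e., #C(F_q) = q^2 + q + 1. Then every F_q-line L is tangent to C at one of its F_q-rational points; that is, for every F_q-line L there exists an F_q-rational point P of C on L such that L meets C at P with intersection multiplicity at least 2. -/

import Mathlib

open MvPolynomial

noncomputable section

/-- The projective plane over a field `K`, as the projectivization of `K^3`. -/
abbrev ProjPlane (K : Type*) [Field K] := Projectivization K (Fin 3 → K)

variable {F : Type*} [Field F]

/-- A geometric point (over the algebraic closure) lies on the plane curve defined by `f`. -/
def OnCurve (f : MvPolynomial (Fin 3) F) (P : ProjPlane (AlgebraicClosure F)) : Prop :=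
  aeval P.rep f = 0

/-- A geometric point lies on the `F`-rational line with coefficient vector `a`. -/
def OnLine (a : Fin 3 → F) (P : ProjPlane (AlgebraicClosure F)) : Prop :=
  ∑ i, algebraMap F (AlgebraicClosure F) (a i) * P.rep i = 0

/-- The plane curve defined by `f` is smooth: the gradient of `f` is nonzero at every
geometric point of the curve. -/
def SmoothCurve (f : MvPolynomial (Fin 3) F) : Prop :=
  ∀ P : ProjPlane (AlgebraicClosure F), OnCurve f P → ∃ i, aeval P.rep (pderiv i f) ≠ 0

/-- The `F`-line with coefficients `a` meets the curve defined by `f` transversely: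
the intersection consists of exactly `d` distinct geometric points. -/
def Transverse (f : MvPolynomial (Fin 3) F) (a : Fin 3 → F) (d : ℕ) : Prop :=
  {P : ProjPlane (AlgebraicClosure F) | OnCurve f P ∧ OnLine a P}.ncard = d

/-- The restriction of `f` to the line `t ↦ v + t • w`, as a univariate polynomial. -/
def LinePoly (f : MvPolynomial (Fin 3) F) (v w : Fin 3 → AlgebraicClosure F) :
    Polynomial (AlgebraicClosure F) :=
  aeval (fun i => Polynomial.C (v i) + Polynomial.X * Polynomial.C (w i)) f

/-- `P` is a flex point of the curve defined by `f`: the tangent line at `P` meets the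
curve at `P` with intersection multiplicity at least 3. The tangent line is parametrized
through `P.rep` and a direction `w` lying on the tangent line, independent from `P.rep`. -/
def IsFlex (f : MvPolynomial (Fin 3) F) (P : ProjPlane (AlgebraicClosure F)) : Prop :=
  OnCurve f P ∧ ∃ w : Fin 3 → AlgebraicClosure F,
    (¬ ∃ c : AlgebraicClosure F, w = c • P.rep) ∧
    (∑ i, aeval P.rep (pderiv i f) * w i = 0) ∧
    (Polynomial.X : Polynomial (AlgebraicClosure F)) ^ 3 ∣ LinePoly f P.rep w

/-- The `F`-line with coefficients `a` is the tangent line to the curve `f` at the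
geometric point `P`, i.e. `a` is proportional to the gradient of `f` at `P`. -/
def IsTangentAt (f : MvPolynomial (Fin 3) F) (a : Fin 3 → F)
    (P : ProjPlane (AlgebraicClosure F)) : Prop :=
  OnCurve f P ∧ ∃ c : AlgebraicClosure F, c ≠ 0 ∧
    ∀ i, algebraMap F (AlgebraicClosure F) (a i) = c * aeval P.rep (pderiv i f)

/-- The `q`-power Frobenius map on the projective plane. -/
def FrobPt {K : Type*} [Field K] (q : ℕ) (P : ProjPlane K) : ProjPlane K :=
  Projectivization.mk K (fun i => P.rep i ^ q) (by
    intro hc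
    rcases Nat.eq_zero_or_pos q with h0 | h0
    · have := congrFun hc 0
      simp [h0] at this
    · apply P.rep_nonzero
      funext i
      have := congrFun hc i
      simp only [Pi.zero_apply] at this ⊢
      exact pow_eq_zero_iff h0.ne' |>.mp this)

/-- A geometric point of the projective plane is `F`-rational. -/
def IsRationalPt (P : ProjPlane (AlgebraicClosure F)) : Prop :=
  ∃ v : Fin 3 → F, v ≠ 0 ∧ ∃ c : AlgebraicClosure F, c ≠ 0 ∧
    ∀ i, P.rep i = c * algebraMap F (AlgebraicClosure F) (v i)

/-- The curve defined by `f` is Frobenius non-classical over `F` (with `q = #F`):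
the image of every geometric point of the curve under the `q`-power Frobenius lies on
the tangent line at that point. -/
def FrobeniusNonClassical (f : MvPolynomial (Fin 3) F) (q : ℕ) : Prop :=
  ∀ P : ProjPlane (AlgebraicClosure F), OnCurve f P →
    ∑ i, aeval P.rep (pderiv i f) * P.rep i ^ q = 0


/-- The univariate polynomial obtained by restricting `f` to the parametrized
`F`-rational line `t ↦ v + t • w`. -/
def LinePolyF (f : MvPolynomial (Fin 3) F) (v w : Fin 3 → F) : Polynomial F :=
  aeval (fun i => Polynomial.C (v i) + Polynomial.X * Polynomial.C (w i)) f

/-- The set of `F`-rational points of the plane curve defined by `f`. -/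
def RatPoints (f : MvPolynomial (Fin 3) F) : Set (Projectivization F (Fin 3 → F)) :=
  {P : Projectivization F (Fin 3 → F) | eval P.rep f = 0}

section Aux



variable {F : Type*} [Field F]

private lemma degree_of_mem_support {f : MvPolynomial (Fin 3) F} {d : ℕ}
    (hf : f.IsHomogeneous d) {m : Fin 3 →₀ ℕ} (hm : m ∈ f.support) :
    ∑ i, m i = d := by
  have h := hf (MvPolynomial.mem_support_iff.mp hm)
  change (Finsupp.weight (fun _ => (1 : ℕ))) m = d at h
  rw [← Finsupp.degree_eq_weight_one] at h
  rw [← h, Finsupp.degree]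
  exact (Finset.sum_subset (Finset.subset_univ _) fun i _ hi =>
    Finsupp.notMem_support_iff.mp hi).symm

private lemma linePolyF_def' (f : MvPolynomial (Fin 3) F) (v w : Fin 3 → F) :
    LinePolyF f v w = ∑ m ∈ f.support,
      Polynomial.C (MvPolynomial.coeff m f) * ∏ i, (Polynomial.C (v i) + Polynomial.X * Polynomial.C (w i)) ^ m i := by
  rw [LinePolyF, MvPolynomial.aeval_def, MvPolynomial.eval₂_eq']
  simp only [Polynomial.algebraMap_eq]

private lemma mv_aeval_eq_eval (g : Fin 3 → F) (f : MvPolynomial (Fin 3) F) :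
    MvPolynomial.aeval g f = MvPolynomial.eval g f := by
  rw [MvPolynomial.aeval_def, Algebra.algebraMap_self, MvPolynomial.eval₂_id]

private lemma linePolyF_eval (f : MvPolynomial (Fin 3) F) (v w : Fin 3 → F) (c : F) :
    (LinePolyF f v w).eval c = MvPolynomial.eval (fun i => v i + c * w i) f := by
  rw [LinePolyF, ← Polynomial.coe_aeval_eq_eval,
    MvPolynomial.comp_aeval_apply _ (Polynomial.aeval c)]
  rw [← mv_aeval_eq_eval]
  have harg : (fun i => (Polynomial.aeval c) (Polynomial.C (v i) + Polynomial.X * Polynomial.C (w i)))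
      = fun i => v i + c * w i := by
    funext i
    simp only [map_add, map_mul, Polynomial.aeval_C, Polynomial.aeval_X,
      Algebra.algebraMap_self, RingHom.id_apply]
  rw [harg]

private lemma linePolyF_shift (f : MvPolynomial (Fin 3) F) (v w : Fin 3 → F) (t0 : F) :
    (LinePolyF f v w).comp (Polynomial.X + Polynomial.C t0) = LinePolyF f (fun i => v i + t0 * w i) w := by
  have h : (LinePolyF f v w).comp (Polynomial.X + Polynomial.C t0)
      = Polynomial.aeval (Polynomial.X + Polynomial.C t0) (LinePolyF f v w) := by
    rw [Polynomial.aeval_def, Polynomial.algebraMap_eq]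
    rfl
  rw [h, LinePolyF, MvPolynomial.comp_aeval_apply _ (Polynomial.aeval (Polynomial.X + Polynomial.C t0)), LinePolyF]
  have harg : (fun i => (Polynomial.aeval (Polynomial.X + Polynomial.C t0))
        (Polynomial.C (v i) + Polynomial.X * Polynomial.C (w i)))
      = fun i => Polynomial.C (v i + t0 * w i) + Polynomial.X * Polynomial.C (w i) := by
    funext i
    simp only [map_add, map_mul, Polynomial.aeval_C, Polynomial.aeval_X,
      Polynomial.algebraMap_eq, Polynomial.C_add, Polynomial.C_mul]
    ring
  rw [harg]

private lemma linePolyF_smul {f : MvPolynomial (Fin 3) F} {d : ℕ} (hf : f.IsHomogeneous d)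
    (c : F) (v w : Fin 3 → F) :
    LinePolyF f (c • v) (c • w) = Polynomial.C (c ^ d) * LinePolyF f v w := by
  rw [linePolyF_def', linePolyF_def', Finset.mul_sum]
  refine Finset.sum_congr rfl fun m hm => ?_
  have hdeg := degree_of_mem_support hf hm
  have hterm : ∀ i, Polynomial.C ((c • v) i) + Polynomial.X * Polynomial.C ((c • w) i) = Polynomial.C c * (Polynomial.C (v i) + Polynomial.X * Polynomial.C (w i)) := by
    intro i
    simp only [Pi.smul_apply, smul_eq_mul, Polynomial.C_mul]
    ring
  simp_rw [hterm, mul_pow, Finset.prod_mul_distrib, Finset.prod_pow_eq_pow_sum, hdeg]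
  rw [← Polynomial.C_pow]
  ring

private lemma eval_smul_homog {f : MvPolynomial (Fin 3) F} {d : ℕ} (hf : f.IsHomogeneous d)
    (c : F) (u : Fin 3 → F) :
    MvPolynomial.eval (fun i => c * u i) f = c ^ d * MvPolynomial.eval u f := by
  rw [MvPolynomial.eval_eq', MvPolynomial.eval_eq', Finset.mul_sum]
  refine Finset.sum_congr rfl fun m hm => ?_
  have hdeg := degree_of_mem_support hf hm
  simp_rw [mul_pow, Finset.prod_mul_distrib, Finset.prod_pow_eq_pow_sum, hdeg]
  ring

private lemma natDegree_linear_le (v w : F) : (Polynomial.C v + Polynomial.X * Polynomial.C w).natDegree ≤ 1 := by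
  refine (Polynomial.natDegree_add_le _ _).trans (max_le ?_ ?_)
  · simp
  · refine (Polynomial.natDegree_mul_le).trans ?_
    simp

private lemma linePolyF_natDegree_le {f : MvPolynomial (Fin 3) F} {d : ℕ}
    (hf : f.IsHomogeneous d) (v w : Fin 3 → F) :
    (LinePolyF f v w).natDegree ≤ d := by
  rw [linePolyF_def']
  refine Polynomial.natDegree_sum_le_of_forall_le _ _ fun m hm => ?_
  refine (Polynomial.natDegree_mul_le).trans ?_
  have hdeg := degree_of_mem_support hf hm
  have h2 : (∏ i, (Polynomial.C (v i) + Polynomial.X * Polynomial.C (w i)) ^ m i).natDegree ≤ d := by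
    refine (Polynomial.natDegree_prod_le _ _).trans ?_
    rw [← hdeg]
    refine Finset.sum_le_sum fun i _ => ?_
    refine (Polynomial.natDegree_pow_le).trans ?_
    have := Nat.mul_le_mul_left (m i) (natDegree_linear_le (v i) (w i))
    omega
  simp only [Polynomial.natDegree_C]
  omega

private lemma reflect_pow_le {p : Polynomial F} {n : ℕ} (h : p.natDegree ≤ n) (m : ℕ) :
    (p ^ m).reflect (m * n) = (p.reflect n) ^ m := by
  induction m with
  | zero => simpa using Polynomial.reflect_monomial 0 0 (R := F)
  | succ k ih =>
    rw [pow_succ, pow_succ, ← ih, show (k + 1) * n = k * n + n by ring,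
      Polynomial.reflect_mul _ _ ((Polynomial.natDegree_pow_le).trans
        (Nat.mul_le_mul_left k h)) h]

private lemma reflect_finset_sum {ι : Type*} (s : Finset ι) (p : ι → Polynomial F) (N : ℕ) :
    (∑ i ∈ s, p i).reflect N = ∑ i ∈ s, (p i).reflect N := by
  classical
  induction s using Finset.induction with
  | empty => simp
  | insert x s hx ih => rw [Finset.sum_insert hx, Finset.sum_insert hx, Polynomial.reflect_add, ih]

private lemma reflect_finset_prod {ι : Type*} (s : Finset ι) (p : ι → Polynomial F)
    (n : ι → ℕ) (h : ∀ i ∈ s, (p i).natDegree ≤ n i) :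
    (∏ i ∈ s, p i).reflect (∑ i ∈ s, n i) = ∏ i ∈ s, (p i).reflect (n i) := by
  classical
  induction s using Finset.induction with
  | empty => simpa using Polynomial.reflect_monomial 0 0 (R := F)
  | insert x s hx ih =>
    rw [Finset.prod_insert hx, Finset.prod_insert hx, Finset.sum_insert hx,
      Polynomial.reflect_mul _ _ (h _ (Finset.mem_insert_self _ _))
        ((Polynomial.natDegree_prod_le _ _).trans
          (Finset.sum_le_sum fun i hi => h i (Finset.mem_insert_of_mem hi))),
      ih fun i hi => h i (Finset.mem_insert_of_mem hi)]

private lemma reflect_linear (v w : F) : (Polynomial.C v + Polynomial.X * Polynomial.C w).reflect 1 = Polynomial.C w + Polynomial.X * Polynomial.C v := by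
  ext n
  rw [Polynomial.coeff_reflect]
  match n with
  | 0 => simp [Polynomial.revAt_le]
  | 1 => simp [Polynomial.revAt_le]
  | (k+2) =>
    have h1 : Polynomial.revAt 1 (k + 2) = k + 2 := Polynomial.revAt_eq_self_of_lt (by omega)
    rw [h1]
    simp [Polynomial.coeff_C, Polynomial.coeff_X_mul]

private lemma linePolyF_reflect {f : MvPolynomial (Fin 3) F} {d : ℕ}
    (hf : f.IsHomogeneous d) (v w : Fin 3 → F) :
    (LinePolyF f v w).reflect d = LinePolyF f w v := by
  rw [linePolyF_def', linePolyF_def', reflect_finset_sum]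
  refine Finset.sum_congr rfl fun m hm => ?_
  have hdeg := degree_of_mem_support hf hm
  rw [Polynomial.reflect_C_mul, ← hdeg,
    reflect_finset_prod _ _ (fun i => m i)
      (fun i _ => (Polynomial.natDegree_pow_le).trans
        (by simpa using Nat.mul_le_mul_left (m i) (natDegree_linear_le (v i) (w i))))]
  congr 1
  refine Finset.prod_congr rfl fun i _ => ?_
  have := reflect_pow_le (natDegree_linear_le (v i) (w i)) (m i)
  rw [mul_one] at this
  rw [this, reflect_linear]

end Aux

section Aux2

private lemma projPlane_card_le (F : Type*) [Field F] [Fintype F] :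
    Nat.card (Projectivization F (Fin 3 → F)) ≤ Fintype.card F ^ 2 + Fintype.card F + 1 := by
  classical
  set ψ : (F × F) ⊕ (F ⊕ Unit) → Projectivization F (Fin 3 → F) := fun x =>
    match x with
    | Sum.inl (x, y) => Projectivization.mk F ![x, y, 1] (by
        intro h; simpa using congrFun h 2)
    | Sum.inr (Sum.inl x) => Projectivization.mk F ![x, 1, 0] (by
        intro h; simpa using congrFun h 1)
    | Sum.inr (Sum.inr _) => Projectivization.mk F ![1, 0, 0] (by
        intro h; simpa using congrFun h 0) with hψ
  have hsurj : Function.Surjective ψ := by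
    intro P
    induction P using Projectivization.ind with
    | h u hu =>
      by_cases h2 : u 2 ≠ 0
      · refine ⟨Sum.inl (u 0 / u 2, u 1 / u 2), ?_⟩
        rw [hψ]
        rw [Projectivization.mk_eq_mk_iff]
        refine ⟨(Units.mk0 (u 2) h2)⁻¹, ?_⟩
        funext i
        fin_cases i <;>
          simp [Units.smul_def, Matrix.cons_val_zero, Matrix.cons_val_one, div_eq_mul_inv,
            mul_comm, inv_mul_cancel₀ h2, mul_inv_cancel₀ h2]
      · push_neg at h2
        by_cases h1 : u 1 ≠ 0
        · refine ⟨Sum.inr (Sum.inl (u 0 / u 1)), ?_⟩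
          rw [hψ]
          rw [Projectivization.mk_eq_mk_iff]
          refine ⟨(Units.mk0 (u 1) h1)⁻¹, ?_⟩
          funext i
          fin_cases i <;>
            simp [Units.smul_def, h2, div_eq_mul_inv, mul_comm, inv_mul_cancel₀ h1, mul_inv_cancel₀ h1]
        · push_neg at h1
          have h0 : u 0 ≠ 0 := by
            intro h0
            apply hu
            funext i
            fin_cases i <;> simp [h0, h1, h2]
          refine ⟨Sum.inr (Sum.inr ()), ?_⟩
          rw [hψ]
          rw [Projectivization.mk_eq_mk_iff]
          refine ⟨(Units.mk0 (u 0) h0)⁻¹, ?_⟩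
          funext i
          fin_cases i <;>
            simp [Units.smul_def, h1, h2, inv_mul_cancel₀ h0, mul_inv_cancel₀ h0]
  have hle := Nat.card_le_card_of_surjective ψ hsurj
  have hcArd : Nat.card ((F × F) ⊕ (F ⊕ Unit)) = Fintype.card F ^ 2 + Fintype.card F + 1 := by
    simp only [Nat.card_eq_fintype_card, Fintype.card_sum, Fintype.card_prod,
      Fintype.card_unit, sq]
    ring
  omega

end Aux2

/-- **Example 2.A.** If `C` is a smooth space-filling plane curve of degree `q + 2` over
`F_q` (i.e. `#C(F_q) = q² + q + 1`), then every `F_q`-line is tangent to `C` at one of its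
`F_q`-rational points: it meets `C` there with intersection multiplicity at least `2`. -/
theorem space_filling_curve_all_lines_tangent
    (p q : ℕ) [Fact p.Prime] (hp : 2 < p)
    (F : Type*) [Field F] [Fintype F] [CharP F p] (hcard : Fintype.card F = q)
    (f : MvPolynomial (Fin 3) F) (hf0 : f ≠ 0) (hfd : f.IsHomogeneous (q + 2))
    (hsmooth : SmoothCurve f)
    (hfill : (RatPoints f).ncard = q ^ 2 + q + 1) :
    ∀ a : Fin 3 → F, a ≠ 0 →
      ∃ P : Projectivization F (Fin 3 → F), eval P.rep f = 0 ∧ (∑ i, a i * P.rep i = 0) ∧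
        ∃ w : Fin 3 → F, (¬ ∃ c : F, w = c • P.rep) ∧ (∑ i, a i * w i = 0) ∧
          (Polynomial.X : Polynomial F) ^ 2 ∣ LinePolyF f P.rep w := by
  subst hcard
  intro a ha
  classical
  haveI : Finite (Projectivization F (Fin 3 → F)) := Quotient.finite _
  have huniv : RatPoints f = Set.univ := by
    refine Set.eq_of_subset_of_ncard_le (Set.subset_univ _) ?_ Set.finite_univ
    rw [Set.ncard_univ, hfill]
    exact projPlane_card_le F
  have hnall : ∀ u : Fin 3 → F, u ≠ 0 → MvPolynomial.eval u f = 0 := by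
    intro u hu
    have h1 : MvPolynomial.eval (Projectivization.mk F u hu).rep f = 0 := by
      have hP : Projectivization.mk F u hu ∈ RatPoints f := by rw [huniv]; trivial
      exact hP
    obtain ⟨γ, hγ⟩ := (Projectivization.mk_eq_mk_iff F _ _
      (Projectivization.rep_nonzero _) hu).mp (Projectivization.mk_rep _)
    have h3 : (fun i => (γ : F) * u i) = (Projectivization.mk F u hu).rep := by
      funext i
      rw [← hγ]
      simp [Units.smul_def]
    have h2 := eval_smul_homog hfd (γ : F) u
    rw [h3, h1] at h2
    have hγ0 : ((γ : F)) ^ (Fintype.card F + 2) ≠ 0 := pow_ne_zero _ γ.ne_zero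
    exact (mul_eq_zero.mp h2.symm).resolve_left hγ0
  obtain ⟨i0, hi0⟩ : ∃ i, a i ≠ 0 := by
    by_contra h
    push_neg at h
    exact ha (funext h)
  have hdist : ∀ i : Fin 3, i + 1 ≠ i ∧ i + 2 ≠ i ∧ i + 1 ≠ i + 2 := by decide
  set j1 := i0 + 1 with hj1
  set j2 := i0 + 2 with hj2
  have hd1 : j1 ≠ i0 := (hdist i0).1
  have hd2 : j2 ≠ i0 := (hdist i0).2.1
  have hd12 : j1 ≠ j2 := (hdist i0).2.2
  set v : Fin 3 → F := Pi.single j1 (a i0) + Pi.single i0 (-(a j1)) with hv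
  set w : Fin 3 → F := Pi.single j2 (a i0) + Pi.single i0 (-(a j2)) with hw
  have hvj1 : v j1 = a i0 := by
    rw [hv]; simp [Pi.single_eq_same, Pi.single_eq_of_ne hd1]
  have hvj2 : v j2 = 0 := by
    rw [hv]; simp [Pi.single_eq_of_ne hd12.symm, Pi.single_eq_of_ne hd2]
  have hwj2 : w j2 = a i0 := by
    rw [hw]; simp [Pi.single_eq_same, Pi.single_eq_of_ne hd2]
  have hwj1 : w j1 = 0 := by
    rw [hw]; simp [Pi.single_eq_of_ne hd12, Pi.single_eq_of_ne hd1]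
  have hv0 : v ≠ 0 := by
    intro h
    have := congrFun h j1
    rw [hvj1] at this
    exact hi0 this
  have hw0 : w ≠ 0 := by
    intro h
    have := congrFun h j2
    rw [hwj2] at this
    exact hi0 this
  have hdot : ∀ (j : Fin 3) (c : F), ∑ i, a i * (Pi.single j c : Fin 3 → F) i = a j * c := by
    intro j c
    rw [Finset.sum_eq_single j (fun b _ hb => by rw [Pi.single_eq_of_ne hb, mul_zero])
      (fun h => absurd (Finset.mem_univ j) h)]
    rw [Pi.single_eq_same]
  have hav : ∑ i, a i * v i = 0 := by
    rw [hv]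
    simp only [Pi.add_apply, mul_add, Finset.sum_add_distrib, hdot]
    ring
  have haw : ∑ i, a i * w i = 0 := by
    rw [hw]
    simp only [Pi.add_apply, mul_add, Finset.sum_add_distrib, hdot]
    ring
  have assemble : ∀ (u z : Fin 3 → F) (hu : u ≠ 0), (∑ i, a i * u i = 0) →
      (∑ i, a i * z i = 0) → (∀ c : F, z ≠ c • u) →
      ((Polynomial.X : Polynomial F) ^ 2 ∣ LinePolyF f u z) →
      ∃ P : Projectivization F (Fin 3 → F), MvPolynomial.eval P.rep f = 0 ∧
        (∑ i, a i * P.rep i = 0) ∧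
        ∃ w : Fin 3 → F, (¬ ∃ c : F, w = c • P.rep) ∧ (∑ i, a i * w i = 0) ∧
          (Polynomial.X : Polynomial F) ^ 2 ∣ LinePolyF f P.rep w := by
    intro u z hu hau haz hprop hdvd
    obtain ⟨γ, hγ⟩ := (Projectivization.mk_eq_mk_iff F _ _
      (Projectivization.rep_nonzero _) hu).mp
      (Projectivization.mk_rep (Projectivization.mk F u hu))
    have hrep : (Projectivization.mk F u hu).rep = (γ : F) • u := by
      rw [← hγ, Units.smul_def]
    have hγ0 : (γ : F) ≠ 0 := γ.ne_zero
    refine ⟨Projectivization.mk F u hu,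
      hnall _ (Projectivization.rep_nonzero _), ?_, (γ : F) • z, ?_, ?_, ?_⟩
    · rw [hrep]
      simp only [Pi.smul_apply, smul_eq_mul]
      have h' : ∀ i ∈ Finset.univ, a i * ((γ : F) * u i) = (γ : F) * (a i * u i) :=
        fun i _ => by ring
      rw [Finset.sum_congr rfl h', ← Finset.mul_sum, hau, mul_zero]
    · rintro ⟨c, hc⟩
      rw [hrep] at hc
      apply hprop c
      funext i
      have hci := congrFun hc i
      simp only [Pi.smul_apply, smul_eq_mul] at hci ⊢
      exact mul_left_cancel₀ hγ0 (by rw [hci]; ring)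
    · simp only [Pi.smul_apply, smul_eq_mul]
      have h' : ∀ i ∈ Finset.univ, a i * ((γ : F) * z i) = (γ : F) * (a i * z i) :=
        fun i _ => by ring
      rw [Finset.sum_congr rfl h', ← Finset.mul_sum, haz, mul_zero]
    · rw [hrep, linePolyF_smul hfd]
      exact hdvd.mul_left _
  have hne1 : ∀ c : F, (fun i => v i + c * w i) ≠ 0 := by
    intro c h
    have h1 := congrFun h j1
    simp only [Pi.zero_apply] at h1
    rw [hvj1, hwj1, mul_zero, add_zero] at h1
    exact hi0 h1
  have hne2 : ∀ c : F, (fun i => w i + c * v i) ≠ 0 := by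
    intro c h
    have h1 := congrFun h j2
    simp only [Pi.zero_apply] at h1
    rw [hwj2, hvj2, mul_zero, add_zero] at h1
    exact hi0 h1
  have hgc : ∀ c : F, (LinePolyF f v w).eval c = 0 := fun c => by
    rw [linePolyF_eval]; exact hnall _ (hne1 c)
  have hGc : ∀ c : F, (LinePolyF f w v).eval c = 0 := fun c => by
    rw [linePolyF_eval]; exact hnall _ (hne2 c)
  have hGg : (LinePolyF f v w).reflect (Fintype.card F + 2) = LinePolyF f w v :=
    linePolyF_reflect hfd v w
  have hG0 : (LinePolyF f w v).coeff 0 = 0 := by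
    rw [Polynomial.coeff_zero_eq_eval_zero]; exact hGc 0
  have htop : (LinePolyF f v w).coeff (Fintype.card F + 2) = 0 := by
    have h1 := hG0
    rw [← hGg, Polynomial.coeff_reflect, Polynomial.revAt_le (Nat.zero_le _),
      Nat.sub_zero] at h1
    exact h1
  have hdeg_le : (LinePolyF f v w).natDegree ≤ Fintype.card F + 2 :=
    linePolyF_natDegree_le hfd v w
  have hgdeg : (LinePolyF f v w).natDegree ≤ Fintype.card F + 1 := by
    rw [Polynomial.natDegree_le_iff_coeff_eq_zero]
    intro N hN
    rcases Nat.lt_or_ge (Fintype.card F + 2) N with h | h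
    · exact Polynomial.coeff_eq_zero_of_natDegree_lt (lt_of_le_of_lt hdeg_le h)
    · have hN2 : N = Fintype.card F + 2 := by omega
      rw [hN2]; exact htop
  by_cases hg0 : LinePolyF f v w = 0
  · refine assemble v w hv0 hav haw ?_ ?_
    · intro c h
      have h1 := congrFun h j2
      simp only [Pi.smul_apply, smul_eq_mul] at h1
      rw [hwj2, hvj2, mul_zero] at h1
      exact hi0 h1
    · rw [hg0]; exact dvd_zero _
  · have hq1 : 1 < Fintype.card F := Fintype.one_lt_card
    have hXq_ne : ((Polynomial.X : Polynomial F) ^ Fintype.card F - Polynomial.X) ≠ 0 :=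
      FiniteField.X_pow_card_sub_X_ne_zero F hq1
    have hqdeg : ((Polynomial.X : Polynomial F) ^ Fintype.card F - Polynomial.X).natDegree
        = Fintype.card F :=
      FiniteField.X_pow_card_sub_X_natDegree_eq F hq1
    have hmonic : ((Polynomial.X : Polynomial F) ^ Fintype.card F - Polynomial.X).Monic := by
      rw [Polynomial.Monic, Polynomial.leadingCoeff, hqdeg]
      simp [Polynomial.coeff_X_pow, Polynomial.coeff_X, hq1.ne]
    have hprodroots : (Multiset.map (fun c => Polynomial.X - Polynomial.C c)
        ((Polynomial.X ^ Fintype.card F - Polynomial.X : Polynomial F).roots)).prod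
        = Polynomial.X ^ Fintype.card F - Polynomial.X := by
      refine Polynomial.prod_multiset_X_sub_C_of_monic_of_roots_card_eq hmonic ?_
      rw [FiniteField.roots_X_pow_card_sub_X F, hqdeg]
      simp
    have hdvd : (Polynomial.X ^ Fintype.card F - Polynomial.X : Polynomial F)
        ∣ LinePolyF f v w := by
      rw [← hprodroots]
      refine dvd_trans (Multiset.prod_dvd_prod_of_le (Multiset.map_le_map ?_))
        (Polynomial.prod_multiset_X_sub_C_dvd _)
      rw [FiniteField.roots_X_pow_card_sub_X F]
      rw [Multiset.le_iff_subset Finset.univ.nodup]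
      intro c _
      rw [Polynomial.mem_roots']
      exact ⟨hg0, hgc c⟩
    obtain ⟨k, hk⟩ := hdvd
    have hk0 : k ≠ 0 := by
      rintro rfl
      rw [mul_zero] at hk
      exact hg0 hk
    have hmul := Polynomial.natDegree_mul hXq_ne hk0
    rw [← hk, hqdeg] at hmul
    have hkdeg : k.natDegree ≤ 1 := by omega
    by_cases hα : k.coeff 1 = 0
    · have hkdeg0 : k.natDegree = 0 := by
        by_contra h
        have h1 : k.natDegree = 1 := by omega
        have h2 := Polynomial.leadingCoeff_ne_zero.mpr hk0
        rw [Polynomial.leadingCoeff, h1] at h2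
        exact h2 hα
      have hcoeffq1 : (LinePolyF f v w).coeff (Fintype.card F + 1) = 0 :=
        Polynomial.coeff_eq_zero_of_natDegree_lt (by omega)
      have hGdvd : (Polynomial.X : Polynomial F) ^ 2 ∣ LinePolyF f w v := by
        rw [Polynomial.X_pow_dvd_iff]
        intro n hn
        interval_cases n
        · exact hG0
        · rw [← hGg, Polynomial.coeff_reflect, Polynomial.revAt_le (by omega),
            (by omega : Fintype.card F + 2 - 1 = Fintype.card F + 1)]
          exact hcoeffq1
      refine assemble w v hw0 haw hav ?_ hGdvd
      intro c h
      have h1 := congrFun h j1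
      simp only [Pi.smul_apply, smul_eq_mul] at h1
      rw [hvj1, hwj1, mul_zero] at h1
      exact hi0 h1
    · set t0 := -(k.coeff 0) / (k.coeff 1) with ht0
      have hkroot : (Polynomial.X - Polynomial.C t0) ∣ k := by
        rw [Polynomial.dvd_iff_isRoot]
        have hkeq := Polynomial.eq_X_add_C_of_natDegree_le_one hkdeg
        rw [Polynomial.IsRoot]
        nth_rewrite 1 [hkeq]
        simp only [Polynomial.eval_add, Polynomial.eval_mul, Polynomial.eval_C,
          Polynomial.eval_X, ht0]
        field_simp
        ring
      have hXroot : (Polynomial.X - Polynomial.C t0)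
          ∣ (Polynomial.X ^ Fintype.card F - Polynomial.X : Polynomial F) := by
        rw [Polynomial.dvd_iff_isRoot, Polynomial.IsRoot]
        simp [FiniteField.pow_card]
      have h2dvd : (Polynomial.X - Polynomial.C t0) ^ 2 ∣ LinePolyF f v w := by
        rw [hk, sq]
        exact mul_dvd_mul hXroot hkroot
      have hcomp : (Polynomial.X : Polynomial F) ^ 2
          ∣ (LinePolyF f v w).comp (Polynomial.X + Polynomial.C t0) := by
        obtain ⟨e, he⟩ := h2dvd
        rw [he, Polynomial.mul_comp, Polynomial.pow_comp, Polynomial.sub_comp,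
          Polynomial.X_comp, Polynomial.C_comp, add_sub_cancel_right]
        exact Dvd.intro _ rfl
      rw [linePolyF_shift] at hcomp
      have hau2 : ∑ i, a i * (v i + t0 * w i) = 0 := by
        have h' : ∀ i ∈ Finset.univ, a i * (v i + t0 * w i)
            = a i * v i + t0 * (a i * w i) := fun i _ => by ring
        rw [Finset.sum_congr rfl h', Finset.sum_add_distrib, ← Finset.mul_sum, hav, haw,
          mul_zero, add_zero]
      refine assemble _ _ (hne1 t0) hau2 haw ?_ hcomp
      intro c h
      have h1 := congrFun h j1
      simp only [Pi.smul_apply, smul_eq_mul] at h1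
      rw [hwj1, hvj1, mul_zero, add_zero] at h1
      have hc0 : c = 0 := by
        rcases mul_eq_zero.mp h1.symm with h' | h'
        · exact h'
        · exact absurd h' hi0
      rw [hc0] at h
      apply hw0
      rw [h]
      funext i
      simp

end
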